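/- Let Ω be the open unit disk in ℝ² ≅ ℂ. For every γ ∈ L²(Ω) and all integers i, j ≥ 1: ∫_Ω γ(z) ⟨∇Re(z^i), ∇Im(z^j)⟩ dz = −∫_Ω γ(z) ⟨∇Re(z^j), ∇Im(z^i)⟩ dz; that is, the matrix K^{cs} with entries K^{cs}_{i,j} = ∫_Ω γ ⟨∇Re(z^i), ∇Im(z^j)⟩ dz is antisymmetric. -/

import Mathlib

open MeasureTheory Real Filter
open scoped RealInnerProductSpace

lemma gradRe_pow (n : ℕ) (z : ℂ) :
    HasGradientAt (fun w : ℂ => (w ^ n).re) ((starRingEnd ℂ) (n * z ^ (n - 1))) z := by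
  rw [hasGradientAt_iff_hasFDerivAt]
  have h := ((hasDerivAt_pow n z).hasFDerivAt).restrictScalars ℝ
  have := (Complex.reCLM.hasFDerivAt).comp z h
  refine this.congr_fderiv ?_
  ext v
  simp [Complex.ext_iff]

lemma gradIm_pow (n : ℕ) (z : ℂ) :
    HasGradientAt (fun w : ℂ => (w ^ n).im) (Complex.I * (starRingEnd ℂ) (n * z ^ (n - 1))) z := by
  rw [hasGradientAt_iff_hasFDerivAt]
  have h := ((hasDerivAt_pow n z).hasFDerivAt).restrictScalars ℝ
  have := (Complex.imCLM.hasFDerivAt).comp z h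
  refine this.congr_fderiv ?_
  ext v
  simp [Complex.ext_iff]
  ring

/-- for every `γ ∈ L²` of the unit disk and all `i, j ≥ 1`, the matrix
`K^{cs}_{i,j} = ∫_Ω γ ⟨∇Re(z^i), ∇Im(z^j)⟩` is antisymmetric. -/
theorem linearized_DtN_cos_sin_antisymmetric (γ : ℂ → ℝ)
    (hγ : MemLp γ 2 (volume.restrict (Metric.ball (0:ℂ) 1)))
    (i j : ℕ) (hi : 1 ≤ i) (hj : 1 ≤ j) :
    (∫ z in Metric.ball (0:ℂ) 1,
        γ z * ⟪gradient (fun w : ℂ => (w ^ i).re) z,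
               gradient (fun w : ℂ => (w ^ j).im) z⟫)
      = -∫ z in Metric.ball (0:ℂ) 1,
          γ z * ⟪gradient (fun w : ℂ => (w ^ j).re) z,
                 gradient (fun w : ℂ => (w ^ i).im) z⟫ := by
  rw [← integral_neg]
  refine integral_congr_ae (Filter.Eventually.of_forall fun z => ?_)
  simp only []
  rw [(gradRe_pow i z).gradient, (gradRe_pow j z).gradient,
      (gradIm_pow i z).gradient, (gradIm_pow j z).gradient]
  rw [← mul_neg]
  congr 1
  simp [Complex.ext_iff, ← map_pow]
  ring
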